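/- Let U and V be finite sets and let P_{UV} and Q_{UV} be probability mass functions on U × V such that P_{UV}(u,v) = 0 whenever Q_{UV}(u,v) = 0; denote by P_U, P_V, Q_V the corresponding marginals and Q_{U|V}(u|v) = Q_{UV}(u,v)/Q_V(v) for Q_V(v) > 0. Define T_U(u) := Σ_v P_V(v) Q_{U|V}(u|v). If T_U = P_U, then the infimum of D(π_{UV} ‖ Q_{UV}) over all probability mass functions π_{UV} on U × V with U-marginal equal to P_U and V-marginal equal to P_V equals D(P_V ‖ Q_V), and it is attained by π_{UV}(u,v) = P_V(v) · Q_{U|V}(u|v). -/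

import Mathlib

/-!
STATEMENT 8: For pmfs `P_{UV}, Q_{UV}` on `U × V` with `P_{UV} ≪ Q_{UV}`, define
`T_U(u) := Σ_v P_V(v) Q_{U|V}(u|v)`. If `T_U = P_U`, then the infimum of `D(π_{UV} ‖ Q_{UV})`
over all pmfs `π_{UV}` with `U`-marginal `P_U` and `V`-marginal `P_V` equals `D(P_V ‖ Q_V)`,
and it is attained by `π_{UV}(u,v) = P_V(v) · Q_{U|V}(u|v)`.
-/

open scoped BigOperators

/-- `P` is a probability mass function on the finite set `Z`. -/
def IsPmf {Z : Type*} [Fintype Z] (P : Z → ℝ) : Prop :=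
  (∀ z, 0 ≤ P z) ∧ ∑ z, P z = 1

/-- Kullback–Leibler divergence (natural log, terms with `P z = 0` contribute `0`);
only meaningful when `P` is absolutely continuous w.r.t. `Q`. -/
noncomputable def klDiv {Z : Type*} [Fintype Z] (P Q : Z → ℝ) : ℝ :=
  ∑ z, if 0 < P z then P z * Real.log (P z / Q z) else 0

/-- Extended-real Kullback–Leibler divergence: equals `+∞` if `P` is not absolutely
continuous with respect to `Q`. -/
noncomputable def klDivE {Z : Type*} [Fintype Z] (P Q : Z → ℝ) : EReal :=
  if ∀ z, Q z = 0 → P z = 0 then ((klDiv P Q : ℝ) : EReal) else ⊤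

lemma klDiv_nonneg_aux {Z : Type*} [Fintype Z] (π ρ : Z → ℝ)
    (hπ0 : ∀ z, 0 ≤ π z) (hπ1 : ∑ z, π z = 1)
    (hρ0 : ∀ z, 0 ≤ ρ z) (hρ1 : ∑ z, ρ z ≤ 1)
    (habs : ∀ z, ρ z = 0 → π z = 0) : 0 ≤ klDiv π ρ := by
  have h1 : ∀ z : Z, (if 0 < π z then π z - ρ z else 0)
      ≤ (if 0 < π z then π z * Real.log (π z / ρ z) else 0) := by
    intro z
    by_cases h : 0 < π z
    · simp only [h, if_true]
      have hρz : 0 < ρ z := lt_of_le_of_ne (hρ0 z) (fun e => by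
        have := habs z e.symm; simp [this] at h)
      have hlog : Real.log (ρ z / π z) ≤ ρ z / π z - 1 :=
        Real.log_le_sub_one_of_pos (div_pos hρz h)
      have hneg : Real.log (π z / ρ z) = - Real.log (ρ z / π z) := by
        rw [Real.log_div (ne_of_gt h) (ne_of_gt hρz), Real.log_div (ne_of_gt hρz) (ne_of_gt h)]
        ring
      rw [hneg]
      have h2 := mul_le_mul_of_nonneg_left hlog (le_of_lt h)
      have h3 : π z * (ρ z / π z) = ρ z := mul_div_cancel₀ (ρ z) (ne_of_gt h)
      nlinarith
    · simp [h]
  have e1 : ∑ z, (if 0 < π z then π z else 0) = 1 := by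
    rw [← hπ1]
    apply Finset.sum_congr rfl
    intro z _
    by_cases h : 0 < π z
    · simp [h]
    · simp [h, le_antisymm (not_lt.mp h) (hπ0 z)]
  have e2 : ∑ z, (if 0 < π z then ρ z else 0) ≤ 1 := by
    refine le_trans (Finset.sum_le_sum (fun z _ => ?_)) hρ1
    by_cases h : 0 < π z <;> simp [h, hρ0 z]
  have e3 : ∑ z, (if 0 < π z then π z - ρ z else 0)
      = (∑ z, (if 0 < π z then π z else 0)) - ∑ z, (if 0 < π z then ρ z else 0) := by
    rw [← Finset.sum_sub_distrib]
    apply Finset.sum_congr rfl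
    intro z _
    by_cases h : 0 < π z <;> simp [h]
  have := Finset.sum_le_sum (fun z (_ : z ∈ Finset.univ) => h1 z)
  unfold klDiv
  calc (0:ℝ) ≤ ∑ z, (if 0 < π z then π z - ρ z else 0) := by rw [e3, e1]; linarith
    _ ≤ _ := this

theorem sInf_klDiv_eq_of_TU_eq_PU {U V : Type*} [Fintype U] [Fintype V]
    (P Q : U × V → ℝ) (hP : IsPmf P) (hQ : IsPmf Q)
    (habs : ∀ p, Q p = 0 → P p = 0)
    (hTU : ∀ u, ∑ v, (∑ u', P (u', v)) * (Q (u, v) / ∑ u', Q (u', v)) = ∑ v, P (u, v)) :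
    sInf {d : EReal | ∃ π : U × V → ℝ, IsPmf π ∧
          (∀ u, ∑ v, π (u, v) = ∑ v, P (u, v)) ∧
          (∀ v, ∑ u, π (u, v) = ∑ u, P (u, v)) ∧
          d = klDivE π Q}
        = klDivE (fun v => ∑ u, P (u, v)) (fun v => ∑ u, Q (u, v)) ∧
      (IsPmf (fun p : U × V => (∑ u', P (u', p.2)) * (Q p / ∑ u', Q (u', p.2))) ∧
       (∀ u, ∑ v, (∑ u', P (u', v)) * (Q (u, v) / ∑ u', Q (u', v)) = ∑ v, P (u, v)) ∧
       (∀ v, ∑ u, (∑ u', P (u', v)) * (Q (u, v) / ∑ u', Q (u', v)) = ∑ u, P (u, v)) ∧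
       klDivE (fun p : U × V => (∑ u', P (u', p.2)) * (Q p / ∑ u', Q (u', p.2))) Q =
         klDivE (fun v => ∑ u, P (u, v)) (fun v => ∑ u, Q (u, v))) := by
  obtain ⟨hP0, hP1⟩ := hP
  obtain ⟨hQ0, hQ1⟩ := hQ
  set PV : V → ℝ := fun v => ∑ u, P (u, v) with hPVdef
  set QV : V → ℝ := fun v => ∑ u, Q (u, v) with hQVdef
  set πs : U × V → ℝ := fun p => PV p.2 * (Q p / QV p.2) with hπsdef
  -- basic facts
  have hPV0 : ∀ v, 0 ≤ PV v := fun v => Finset.sum_nonneg (fun u _ => hP0 (u, v))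
  have hQV0 : ∀ v, 0 ≤ QV v := fun v => Finset.sum_nonneg (fun u _ => hQ0 (u, v))
  have hQV_zero : ∀ v, QV v = 0 → ∀ u, Q (u, v) = 0 := by
    intro v hv u
    exact (Finset.sum_eq_zero_iff_of_nonneg (fun u _ => hQ0 (u, v))).mp hv u (Finset.mem_univ u)
  have habsV : ∀ v, QV v = 0 → PV v = 0 := by
    intro v hv
    exact Finset.sum_eq_zero (fun u _ => habs _ (hQV_zero v hv u))
  have hQle : ∀ p : U × V, Q p ≤ QV p.2 := fun p =>
    Finset.single_le_sum (fun u (_ : u ∈ Finset.univ) => hQ0 (u, p.2)) (Finset.mem_univ p.1)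
  -- facts about πs
  have hπs0 : ∀ p, 0 ≤ πs p := fun p =>
    mul_nonneg (hPV0 p.2) (div_nonneg (hQ0 p) (hQV0 p.2))
  have hπs_abs : ∀ p, Q p = 0 → πs p = 0 := by
    intro p hp; simp [hπsdef, hp]
  have hπsV : ∀ v, ∑ u, πs (u, v) = PV v := by
    intro v
    have h1 : ∑ u, πs (u, v) = PV v * (QV v / QV v) := by
      simp only [hπsdef]
      rw [← Finset.mul_sum, ← Finset.sum_div]
    rw [h1]
    rcases eq_or_lt_of_le (hQV0 v) with h | h
    · rw [← h]
      simp [habsV v h.symm]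
    · rw [div_self (ne_of_gt h), mul_one]
  have hPVsum : ∑ v, PV v = 1 := by
    rw [← hP1, Fintype.sum_prod_type]
    exact Finset.sum_comm
  have hπs1 : ∑ p, πs p = 1 := by
    rw [Fintype.sum_prod_type, Finset.sum_comm, ← hPVsum]
    exact Finset.sum_congr rfl (fun v _ => hπsV v)
  have hπsU : ∀ u, ∑ v, πs (u, v) = ∑ v, P (u, v) := by
    intro u
    simpa [hπsdef] using hTU u
  -- key identity: for any feasible π, klDiv π Q = klDiv π πs + klDiv PV QV
  have key : ∀ π : U × V → ℝ, (∀ p, 0 ≤ π p) → (∀ p, Q p = 0 → π p = 0) →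
      (∀ v, ∑ u, π (u, v) = PV v) →
      klDiv π Q = klDiv π πs + klDiv PV QV := by
    intro π hπ0 hπabs hπV
    have step : ∀ p : U × V, (if 0 < π p then π p * Real.log (π p / Q p) else 0)
        = (if 0 < π p then π p * Real.log (π p / πs p) else 0)
          + π p * Real.log (PV p.2 / QV p.2) := by
      intro p
      by_cases h : 0 < π p
      · simp only [h, if_true]
        have hQp : 0 < Q p := lt_of_le_of_ne (hQ0 p) (fun e => by
          have := hπabs p e.symm; simp [this] at h)
        have hPVp : 0 < PV p.2 := lt_of_lt_of_le h (by
          rw [← hπV p.2]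
          exact Finset.single_le_sum (fun u (_ : u ∈ Finset.univ) => hπ0 (u, p.2))
            (Finset.mem_univ p.1))
        have hQVp : 0 < QV p.2 := lt_of_lt_of_le hQp (hQle p)
        have hπsp : 0 < πs p := mul_pos hPVp (div_pos hQp hQVp)
        have hratio : π p / Q p = (π p / πs p) * (PV p.2 / QV p.2) := by
          simp only [hπsdef]
          field_simp
        rw [hratio, Real.log_mul (ne_of_gt (div_pos h hπsp))
          (ne_of_gt (div_pos hPVp hQVp)), mul_add]
      · have h0 : π p = 0 := le_antisymm (not_lt.mp h) (hπ0 p)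
        simp [h, h0]
    have expand : klDiv π Q = klDiv π πs + ∑ p : U × V, π p * Real.log (PV p.2 / QV p.2) := by
      unfold klDiv
      rw [← Finset.sum_add_distrib]
      exact Finset.sum_congr rfl (fun p _ => step p)
    rw [expand]
    congr 1
    rw [Fintype.sum_prod_type, Finset.sum_comm]
    unfold klDiv
    apply Finset.sum_congr rfl
    intro v _
    show ∑ x : U, π (x, v) * Real.log (PV v / QV v) = _
    rw [← Finset.sum_mul, hπV v]
    rcases eq_or_lt_of_le (hPV0 v) with h | h
    · simp [← h]
    · simp [h]
  -- klDiv πs πs = 0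
  have hself : klDiv πs πs = 0 := by
    unfold klDiv
    apply Finset.sum_eq_zero
    intro p _
    by_cases h : 0 < πs p
    · simp [h, div_self (ne_of_gt h)]
    · simp [h]
  have hπs_klDiv : klDiv πs Q = klDiv PV QV := by
    rw [key πs hπs0 hπs_abs hπsV, hself, zero_add]
  have hEπs : klDivE πs Q = klDivE PV QV := by
    unfold klDivE
    rw [if_pos hπs_abs, if_pos habsV, hπs_klDiv]
  constructor
  · apply le_antisymm
    · apply sInf_le
      exact ⟨πs, ⟨hπs0, hπs1⟩, hπsU, fun v => hπsV v, hEπs.symm⟩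
    · apply le_sInf
      rintro d ⟨π, ⟨hπ0, hπ1⟩, hπU, hπV, rfl⟩
      by_cases hac : ∀ z, Q z = 0 → π z = 0
      · have hacπs : ∀ p, πs p = 0 → π p = 0 := by
          intro p hp
          rcases mul_eq_zero.mp hp with h | h
          · have hs : ∑ u, π (u, p.2) = 0 := by rw [hπV p.2]; exact h
            exact (Finset.sum_eq_zero_iff_of_nonneg
              (fun u _ => hπ0 (u, p.2))).mp hs p.1 (Finset.mem_univ p.1)
          · rcases div_eq_zero_iff.mp h with h' | h'
            · exact hac p h'
            · exact hac p (hQV_zero p.2 h' p.1)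
        have h1 : klDiv π Q = klDiv π πs + klDiv PV QV := key π hπ0 hac hπV
        have h2 : 0 ≤ klDiv π πs :=
          klDiv_nonneg_aux π πs hπ0 hπ1 hπs0 (le_of_eq hπs1) hacπs
        show klDivE PV QV ≤ klDivE π Q
        unfold klDivE
        rw [if_pos habsV, if_pos hac]
        exact_mod_cast (by linarith : klDiv PV QV ≤ klDiv π Q)
      · show klDivE PV QV ≤ klDivE π Q
        unfold klDivE
        rw [if_neg hac]
        exact le_top
  · exact ⟨⟨hπs0, hπs1⟩, hTU, fun v => hπsV v, hEπs⟩
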